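/- Let f : X → Y be a functor between essentially finite groupoids. Then the pullback functor f* : [Y, Vect_ℂ] → [X, Vect_ℂ] given by precomposition with f admits a functor f_* : [X, Vect_ℂ] → [Y, Vect_ℂ] that is simultaneously a left adjoint and a right adjoint to f* (an ambidextrous adjunction). -/

import Mathlib

open CategoryTheory

open CategoryTheory Limits
set_option linter.unusedSectionVars false

namespace Ambi

variable {J : Type} [Groupoid J] [∀ a b : J, Fintype (a ⟶ b)]
variable {C : Type*} [Category C] [Preadditive C] [CategoryTheory.Linear ℂ C]

/-- precomposition equivalence -/
@[simps] def precompEquiv {i j k : J} (v : i ⟶ j) : (j ⟶ k) ≃ (i ⟶ k) where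
  toFun u := v ≫ u
  invFun w := Groupoid.inv v ≫ w
  left_inv u := by simp
  right_inv w := by simp

@[simps] def postcompEquiv {j k k' : J} (v : k ⟶ k') : (j ⟶ k) ≃ (j ⟶ k') where
  toFun u := u ≫ v
  invFun w := w ≫ Groupoid.inv v
  left_inv u := by simp
  right_inv w := by simp

lemma card_aut_congr {k k' : J} (v : k ⟶ k') :
    Nat.card (k ⟶ k) = Nat.card (k' ⟶ k') :=
  Nat.card_congr ((postcompEquiv v).trans (precompEquiv (Groupoid.inv v)))

lemma card_aut_ne_zero (k : J) : (Nat.card (k ⟶ k) : ℂ) ≠ 0 := by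
  have : 0 < Nat.card (k ⟶ k) := Nat.card_pos
  exact_mod_cast this.ne'

/-- The norm morphism. -/
noncomputable def nm (F : J ⥤ C) (j k : J) : F.obj j ⟶ F.obj k :=
  (Nat.card (k ⟶ k) : ℂ)⁻¹ • ∑ u : (j ⟶ k), F.map u

lemma map_comp_nm (F : J ⥤ C) {i j k : J} (v : i ⟶ j) :
    F.map v ≫ nm F j k = nm F i k := by
  rw [nm, nm, Linear.comp_smul, Preadditive.comp_sum]
  congr 1
  rw [← Equiv.sum_comp (precompEquiv (k := k) v)]
  simp [precompEquiv]

lemma nm_comp_map (F : J ⥤ C) {j k k' : J} (v : k ⟶ k') :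
    nm F j k ≫ F.map v = nm F j k' := by
  rw [nm, nm, Linear.smul_comp, Preadditive.sum_comp, card_aut_congr v]
  congr 1
  rw [← Equiv.sum_comp (postcompEquiv (j := j) v)]
  simp [postcompEquiv]

end Ambi

set_option linter.unusedSectionVars false

namespace Ambi2
open Ambi

variable {J : Type} [Groupoid J] [∀ a b : J, Fintype (a ⟶ b)] [Fintype (Skeleton J)]
variable {C : Type*} [Category C] [Preadditive C] [CategoryTheory.Linear ℂ C]

lemma skel_eq_of_hom {j : J} {x : Skeleton J} (u : j ⟶ (fromSkeleton J).obj x) :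
    x = toSkeleton j := by
  refine (Quotient.out_eq x).symm.trans (Quotient.sound ?_)
  exact ⟨(Groupoid.isoEquivHom _ _ |>.symm u).symm⟩

lemma card_hom_toSkeleton_left (j : J) :
    Nat.card (j ⟶ (fromSkeleton J).obj (toSkeleton j)) =
      Nat.card ((fromSkeleton J).obj (toSkeleton j) ⟶ (fromSkeleton J).obj (toSkeleton j)) :=
  Nat.card_congr (precompEquiv ((fromSkeletonToSkeletonIso j).hom))

lemma card_hom_toSkeleton_right (k : J) :
    Nat.card ((fromSkeleton J).obj (toSkeleton k) ⟶ k) = Nat.card (k ⟶ k) :=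
  Nat.card_congr (precompEquiv ((fromSkeletonToSkeletonIso k).inv))

/-- key summation lemma, cocone version -/
lemma sum_nm_comp_cocone (F : J ⥤ C) (s : Cocone F) (j : J) :
    ∑ x : Skeleton J, nm F j ((fromSkeleton J).obj x) ≫ s.ι.app ((fromSkeleton J).obj x)
      = s.ι.app j := by
  have hterm : ∀ x : Skeleton J,
      nm F j ((fromSkeleton J).obj x) ≫ s.ι.app ((fromSkeleton J).obj x) =
      ((Nat.card ((fromSkeleton J).obj x ⟶ (fromSkeleton J).obj x) : ℂ)⁻¹ *
        (Nat.card (j ⟶ (fromSkeleton J).obj x) : ℂ)) • s.ι.app j := by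
    intro x
    rw [nm, Linear.smul_comp, Preadditive.sum_comp, mul_smul]
    congr 1
    have : ∀ u : (j ⟶ (fromSkeleton J).obj x),
        F.map u ≫ s.ι.app ((fromSkeleton J).obj x) = s.ι.app j := fun u => s.w u
    rw [Finset.sum_congr rfl (fun u _ => this u), Finset.sum_const, Finset.card_univ]
    rw [Nat.card_eq_fintype_card, ← Nat.cast_smul_eq_nsmul ℂ]
  rw [Finset.sum_congr rfl (fun x _ => hterm x)]
  rw [Finset.sum_eq_single (toSkeleton j)]
  · rw [card_hom_toSkeleton_left j, inv_mul_cancel₀ (card_aut_ne_zero _), one_smul]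
  · intro x _ hx
    have : IsEmpty (j ⟶ (fromSkeleton J).obj x) := by
      by_contra h
      rw [not_isEmpty_iff] at h
      exact hx (skel_eq_of_hom h.some)
    have h0 : Nat.card (j ⟶ (fromSkeleton J).obj x) = 0 := @Nat.card_of_isEmpty _ this
    rw [h0, Nat.cast_zero, mul_zero, zero_smul]
  · intro h; exact absurd (Finset.mem_univ _) h

/-- key summation lemma, cone version -/
lemma sum_comp_nm_cone (F : J ⥤ C) (s : Cone F) (k : J) :
    ∑ x : Skeleton J, s.π.app ((fromSkeleton J).obj x) ≫ nm F ((fromSkeleton J).obj x) k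
      = s.π.app k := by
  have hterm : ∀ x : Skeleton J,
      s.π.app ((fromSkeleton J).obj x) ≫ nm F ((fromSkeleton J).obj x) k =
      ((Nat.card (k ⟶ k) : ℂ)⁻¹ *
        (Nat.card ((fromSkeleton J).obj x ⟶ k) : ℂ)) • s.π.app k := by
    intro x
    rw [nm, Linear.comp_smul, Preadditive.comp_sum, mul_smul]
    congr 1
    have : ∀ u : ((fromSkeleton J).obj x ⟶ k),
        s.π.app ((fromSkeleton J).obj x) ≫ F.map u = s.π.app k := fun u => s.w u
    rw [Finset.sum_congr rfl (fun u _ => this u), Finset.sum_const, Finset.card_univ]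
    rw [Nat.card_eq_fintype_card, ← Nat.cast_smul_eq_nsmul ℂ]
  rw [Finset.sum_congr rfl (fun x _ => hterm x)]
  rw [Finset.sum_eq_single (toSkeleton k)]
  · rw [card_hom_toSkeleton_right k, inv_mul_cancel₀ (card_aut_ne_zero _), one_smul]
  · intro x _ hx
    have : IsEmpty ((fromSkeleton J).obj x ⟶ k) := by
      by_contra h
      rw [not_isEmpty_iff] at h
      exact hx (skel_eq_of_hom (Groupoid.inv h.some))
    have h0 : Nat.card ((fromSkeleton J).obj x ⟶ k) = 0 := @Nat.card_of_isEmpty _ this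
    rw [h0, Nat.cast_zero, mul_zero, zero_smul]
  · intro h; exact absurd (Finset.mem_univ _) h

end Ambi2

namespace Ambi3
open Ambi Ambi2

variable {J : Type} [Groupoid J] [∀ a b : J, Fintype (a ⟶ b)]
variable {C : Type*} [Category C] [Preadditive C] [CategoryTheory.Linear ℂ C]
variable {F : J ⥤ C}

/-- The cocone on the limit point. -/
@[simps pt] noncomputable def coconeOfCone (c : Cone F) (hc : IsLimit c) : Cocone F where
  pt := c.pt
  ι :=
    { app := fun j => hc.lift ⟨F.obj j,
        { app := fun k => nm F j k
          naturality := fun k k' v => by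
            dsimp; rw [Category.id_comp, nm_comp_map] }⟩
      naturality := fun j j' v => hc.hom_ext (fun k => by
        simp only [Category.assoc, IsLimit.fac, Functor.const_obj_obj, Functor.const_obj_map,
          Category.comp_id]
        rw [map_comp_nm]) }

lemma coconeOfCone_comp_π (c : Cone F) (hc : IsLimit c) (j k : J) :
    (coconeOfCone c hc).ι.app j ≫ c.π.app k = nm F j k := hc.fac _ k

variable [Fintype (Skeleton J)]

lemma id_eq_sum_coconeOfCone (c : Cone F) (hc : IsLimit c) :
    𝟙 c.pt = ∑ x : Skeleton J, c.π.app ((fromSkeleton J).obj x) ≫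
      (coconeOfCone c hc).ι.app ((fromSkeleton J).obj x) :=
  hc.hom_ext (fun k => by
    rw [Category.id_comp, Preadditive.sum_comp]
    refine (sum_comp_nm_cone F c k).symm.trans (Finset.sum_congr rfl (fun x _ => ?_))
    exact ((Category.assoc (c.π.app ((fromSkeleton J).obj x)) ((coconeOfCone c hc).ι.app ((fromSkeleton J).obj x)) (c.π.app k)).trans (congrArg (c.π.app ((fromSkeleton J).obj x) ≫ ·) (coconeOfCone_comp_π c hc ((fromSkeleton J).obj x) k))).symm)

/-- A limit cone over a finite groupoid is also a colimit cocone. -/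
noncomputable def coconeOfConeIsColimit (c : Cone F) (hc : IsLimit c) :
    IsColimit (coconeOfCone c hc) where
  desc s := ∑ x : Skeleton J, c.π.app ((fromSkeleton J).obj x) ≫
      s.ι.app ((fromSkeleton J).obj x)
  fac s j := by
    rw [Preadditive.comp_sum]
    refine Eq.trans (Finset.sum_congr rfl (fun x _ => ?_)) (sum_nm_comp_cocone F s j)
    exact (Category.assoc ((coconeOfCone c hc).ι.app j) (c.π.app ((fromSkeleton J).obj x)) (s.ι.app ((fromSkeleton J).obj x))).symm.trans (congrArg (· ≫ s.ι.app ((fromSkeleton J).obj x)) (coconeOfCone_comp_π c hc j ((fromSkeleton J).obj x)))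
  uniq s m hm := by
    have := id_eq_sum_coconeOfCone c hc
    refine ((Category.id_comp (X := c.pt) m).symm.trans ?_ : _)
    rw [this]
    exact (Preadditive.sum_comp _ _ m).trans <| Finset.sum_congr rfl (fun x _ => (Category.assoc (c.π.app ((fromSkeleton J).obj x)) ((coconeOfCone c hc).ι.app ((fromSkeleton J).obj x)) m).trans (congrArg (c.π.app ((fromSkeleton J).obj x) ≫ ·) (hm ((fromSkeleton J).obj x))))

/-- The cone on the colimit point. -/
@[simps pt] noncomputable def coneOfCocone (t : Cocone F) (ht : IsColimit t) : Cone F where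
  pt := t.pt
  π :=
    { app := fun k => ht.desc ⟨F.obj k,
        { app := fun j => nm F j k
          naturality := fun j j' v => by
            dsimp; rw [Category.comp_id, map_comp_nm] }⟩
      naturality := fun k k' v => ht.hom_ext (fun j => by
        simp only [Functor.const_obj_obj, IsColimit.fac, Functor.const_obj_map, Category.id_comp,
          ← Category.assoc]
        exact (nm_comp_map F v).symm) }

lemma ι_comp_coneOfCocone (t : Cocone F) (ht : IsColimit t) (j k : J) :
    t.ι.app j ≫ (coneOfCocone t ht).π.app k = nm F j k := ht.fac _ j

lemma id_eq_sum_coneOfCocone (t : Cocone F) (ht : IsColimit t) :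
    𝟙 t.pt = ∑ x : Skeleton J, (coneOfCocone t ht).π.app ((fromSkeleton J).obj x) ≫
      t.ι.app ((fromSkeleton J).obj x) :=
  ht.hom_ext (fun j => by
    simp only [Functor.const_obj_obj, Category.comp_id, Preadditive.comp_sum]
    refine (sum_nm_comp_cocone F t j).symm.trans (Finset.sum_congr rfl (fun x _ => ?_))
    exact (congrArg (· ≫ t.ι.app ((fromSkeleton J).obj x)) (ι_comp_coneOfCocone t ht j ((fromSkeleton J).obj x))).symm.trans (Category.assoc (t.ι.app j) ((coneOfCocone t ht).π.app ((fromSkeleton J).obj x)) (t.ι.app ((fromSkeleton J).obj x))))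

/-- A colimit cocone over a finite groupoid is also a limit cone. -/
noncomputable def coneOfCoconeIsLimit (t : Cocone F) (ht : IsColimit t) :
    IsLimit (coneOfCocone t ht) where
  lift s := ∑ x : Skeleton J, s.π.app ((fromSkeleton J).obj x) ≫
      t.ι.app ((fromSkeleton J).obj x)
  fac s k := by
    rw [Preadditive.sum_comp]
    refine Eq.trans (Finset.sum_congr rfl (fun x _ => ?_)) (sum_comp_nm_cone F s k)
    exact (Category.assoc (s.π.app ((fromSkeleton J).obj x)) (t.ι.app ((fromSkeleton J).obj x)) ((coneOfCocone t ht).π.app k)).trans (congrArg (s.π.app ((fromSkeleton J).obj x) ≫ ·) (ι_comp_coneOfCocone t ht ((fromSkeleton J).obj x) k))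
  uniq s m hm := by
    refine ((Category.comp_id (Y := t.pt) m).symm.trans ?_ : _)
    rw [id_eq_sum_coneOfCocone t ht]
    exact (Preadditive.comp_sum _ m _).trans <| Finset.sum_congr rfl (fun x _ => (Category.assoc m ((coneOfCocone t ht).π.app ((fromSkeleton J).obj x)) (t.ι.app ((fromSkeleton J).obj x))).symm.trans (congrArg (· ≫ t.ι.app ((fromSkeleton J).obj x)) (hm ((fromSkeleton J).obj x))))

lemma hasColimitsOfShape_of_finite_groupoid [HasLimitsOfShape J C] :
    HasColimitsOfShape J C :=
  ⟨fun F => HasColimit.mk ⟨coconeOfCone (limit.cone F) (limit.isLimit F),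
    coconeOfConeIsColimit _ _⟩⟩

end Ambi3

namespace Ambi4
open Ambi Ambi2 Ambi3

lemma hasLimitsOfShape_of_finite (K : Type) [Category.{0,0} K]
    (h1 : Finite (Skeleton K)) (h2 : ∀ a b : K, Finite (a ⟶ b))
    {C : Type*} [Category C] [HasFiniteLimits C] : HasLimitsOfShape K C := by
  haveI : Fintype (Skeleton K) := Fintype.ofFinite _
  haveI : ∀ a b : Skeleton K, Fintype (a ⟶ b) := fun a b => @Fintype.ofFinite _ (@Finite.of_equiv _ _ (h2 _ _) InducedCategory.homEquiv.symm)
  haveI : FinCategory (Skeleton K) := {}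
  exact hasLimitsOfShape_of_equivalence (skeletonEquivalence K)

variable {X Y : Type} [Groupoid.{0} X] [Groupoid.{0} Y] (f : X ⥤ Y)

instance costructuredGroupoid (y : Y) : Groupoid (CostructuredArrow f y) :=
  { (inferInstance : Category (CostructuredArrow f y)) with
    inv := fun {a b} u => CostructuredArrow.homMk (Groupoid.inv u.left)
      (by rw [← CostructuredArrow.w u]; simp)
    inv_comp := fun {a b} u => by
      apply CostructuredArrow.hom_ext; simp
    comp_inv := fun {a b} u => by
      apply CostructuredArrow.hom_ext; simp }

noncomputable instance costructuredFintypeHom [∀ a b : X, Finite (a ⟶ b)] (y : Y)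
    (a b : CostructuredArrow f y) : Fintype (a ⟶ b) := by
  have : Finite (a ⟶ b) := Finite.of_injective (fun u => u.left)
    (fun u v h => CostructuredArrow.hom_ext _ _ h)
  exact Fintype.ofFinite _

lemma costructuredSkeletonFinite [Finite (Skeleton X)] [∀ a b : Y, Finite (a ⟶ b)] (y : Y) :
    Finite (Skeleton (CostructuredArrow f y)) := by
  have hsurj : Function.Surjective
      (fun p : Σ s : Skeleton X, (f.obj ((fromSkeleton X).obj s) ⟶ y) =>
        toSkeleton (CostructuredArrow.mk p.2)) := by
    intro z
    set a := (fromSkeleton (CostructuredArrow f y)).obj z with ha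
    refine ⟨⟨toSkeleton a.left, f.map (fromSkeletonToSkeletonIso a.left).hom ≫ a.hom⟩, ?_⟩
    have h1 : toSkeleton (CostructuredArrow.mk (f.map (fromSkeletonToSkeletonIso a.left).hom ≫ a.hom)) =
        toSkeleton a := by
      apply Quotient.sound
      exact ⟨CostructuredArrow.isoMk (fromSkeletonToSkeletonIso a.left) rfl⟩
    show toSkeleton (CostructuredArrow.mk (f.map (fromSkeletonToSkeletonIso a.left).hom ≫ a.hom)) = z
    rw [h1, ha]
    exact Quotient.out_eq z
  exact Finite.of_surjective _ hsurj

noncomputable instance costructuredSkeletonFintype [Finite (Skeleton X)]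
    [∀ a b : Y, Finite (a ⟶ b)] (y : Y) : Fintype (Skeleton (CostructuredArrow f y)) := by
  have := costructuredSkeletonFinite f y
  exact Fintype.ofFinite _

instance costructuredHasLimits [Finite (Skeleton X)] [∀ a b : X, Finite (a ⟶ b)]
    [∀ a b : Y, Finite (a ⟶ b)] {C : Type*} [Category C] [HasFiniteLimits C] (y : Y) :
    HasLimitsOfShape (CostructuredArrow f y) C :=
  hasLimitsOfShape_of_finite _ (costructuredSkeletonFinite f y)
    (fun a b => Finite.of_fintype _)

instance costructuredHasColimits [Finite (Skeleton X)] [∀ a b : X, Finite (a ⟶ b)]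
    [∀ a b : Y, Finite (a ⟶ b)] {C : Type*} [Category C] [Preadditive C]
    [CategoryTheory.Linear ℂ C] [HasFiniteLimits C] (y : Y) :
    HasColimitsOfShape (CostructuredArrow f y) C :=
  hasColimitsOfShape_of_finite_groupoid (J := CostructuredArrow f y) (C := C)

end Ambi4

namespace Ambi5
open Ambi Ambi2 Ambi3 Ambi4 Functor

variable {J : Type} [Groupoid J] [∀ a b : J, Fintype (a ⟶ b)]
variable {C : Type*} [Category C] [Preadditive C] [CategoryTheory.Linear ℂ C]

lemma nm_natural {D D' : J ⥤ C} (τ : D ⟶ D') (j k : J) :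
    nm D j k ≫ τ.app k = τ.app j ≫ nm D' j k := by
  rw [nm, nm, Linear.smul_comp, Linear.comp_smul, Preadditive.sum_comp, Preadditive.comp_sum]
  congr 1
  exact Finset.sum_congr rfl (fun u _ => τ.naturality u)

end Ambi5

namespace Ambi6
open Ambi Ambi2 Ambi3 Ambi4 Ambi5 Functor

variable {X Y : Type} [Groupoid.{0} X] [Groupoid.{0} Y] (f : X ⥤ Y)
variable [∀ a b : X, Finite (a ⟶ b)]

/-- hom equivalence along the post-composition functor -/
@[simps] def mapHomEquiv {y y' : Y} (γ : y ⟶ y') (a b : CostructuredArrow f y) :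
    (a ⟶ b) ≃ ((CostructuredArrow.map γ).obj a ⟶ (CostructuredArrow.map γ).obj b) where
  toFun u := (CostructuredArrow.map γ).map u
  invFun w := CostructuredArrow.homMk w.left (by
    have hw := CostructuredArrow.w w
    simp only [CostructuredArrow.map_obj_left, CostructuredArrow.map_obj_hom] at hw
    rw [← Category.assoc] at hw
    exact (cancel_mono γ).1 hw)
  left_inv u := CostructuredArrow.hom_ext _ _ rfl
  right_inv w := CostructuredArrow.hom_ext _ _ rfl

variable {C : Type*} [Category C] [Preadditive C] [CategoryTheory.Linear ℂ C]

lemma nm_transport {y y' : Y} (γ : y ⟶ y') (F : X ⥤ C) (a b : CostructuredArrow f y) :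
    nm (CostructuredArrow.proj f y ⋙ F) a b =
      nm (CostructuredArrow.proj f y' ⋙ F)
        ((CostructuredArrow.map γ).obj a) ((CostructuredArrow.map γ).obj b) := by
  rw [nm, nm]
  rw [Nat.card_congr (mapHomEquiv f γ b b)]
  congr 1
  rw [← Equiv.sum_comp (mapHomEquiv f γ a b)]
  rfl

end Ambi6

namespace Ambi7
open Ambi Ambi2 Ambi3 Ambi4 Ambi5 Ambi6 Functor CategoryTheory.Functor

variable {X Y : Type} [Groupoid.{0} X] [Groupoid.{0} Y] (f : X ⥤ Y)
variable [Finite (Skeleton X)] [∀ a b : X, Finite (a ⟶ b)] [∀ a b : Y, Finite (a ⟶ b)]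
variable {C : Type*} [Category C] [Preadditive C] [CategoryTheory.Linear ℂ C]
variable [HasFiniteLimits C]
variable (F : X ⥤ C)

instance hplke : f.HasPointwiseLeftKanExtension F := fun _ => inferInstance

/-- pointwise colimit structure on the left Kan extension -/
noncomputable def hE :
    (LeftExtension.mk (f.lan.obj F) (f.lanUnit.app F)).IsPointwiseLeftKanExtension :=
  isPointwiseLeftKanExtensionOfIsLeftKanExtension (F := F) _ (f.lanUnit.app F)

/-- the counit component -/
noncomputable def epsApp (x : X) : (f.lan.obj F).obj (f.obj x) ⟶ F.obj x :=
  (coneOfCocone _ (hE f F (f.obj x))).π.app (CostructuredArrow.mk (𝟙 (f.obj x)))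

lemma ι_epsApp (x : X) (g : CostructuredArrow f (f.obj x)) :
    (f.lanUnit.app F).app g.left ≫ (f.lan.obj F).map g.hom ≫ epsApp f F x =
      nm (CostructuredArrow.proj f (f.obj x) ⋙ F) g (CostructuredArrow.mk (𝟙 (f.obj x))) := by
  have h := ι_comp_coneOfCocone
    ((LeftExtension.mk (f.lan.obj F) (f.lanUnit.app F)).coconeAt (f.obj x))
    (hE f F (f.obj x)) g (CostructuredArrow.mk (𝟙 (f.obj x)))
  exact (Category.assoc _ _ _).symm.trans h

lemma U2 (y : Y) (g₀ g : CostructuredArrow f y) :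
    (f.lanUnit.app F).app g₀.left ≫ (f.lan.obj F).map g₀.hom ≫
      (f.lan.obj F).map (Groupoid.inv g.hom) ≫ epsApp f F g.left =
    nm (CostructuredArrow.proj f y ⋙ F) g₀ g := by
  have h1 := ι_epsApp f F g.left (CostructuredArrow.mk (g₀.hom ≫ Groupoid.inv g.hom))
  simp only [CostructuredArrow.mk_left, CostructuredArrow.mk_hom_eq_self] at h1
  simp only [← Functor.map_comp_assoc]
  rw [h1]
  have t1 : nm (CostructuredArrow.proj f y ⋙ F) g₀ g =
      nm (CostructuredArrow.proj f (f.obj g.left) ⋙ F)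
        (CostructuredArrow.mk (g₀.hom ≫ Groupoid.inv g.hom))
        (CostructuredArrow.mk (g.hom ≫ Groupoid.inv g.hom)) :=
    nm_transport f (Groupoid.inv g.hom) F g₀ g
  have t2 := nm_comp_map (CostructuredArrow.proj f (f.obj g.left) ⋙ F)
    (j := CostructuredArrow.mk (g₀.hom ≫ Groupoid.inv g.hom))
    (CostructuredArrow.homMk (𝟙 g.left) (by simp) :
      CostructuredArrow.mk (g.hom ≫ Groupoid.inv g.hom) ⟶
        CostructuredArrow.mk (𝟙 (f.obj g.left)))
  have hv : (CostructuredArrow.proj f (f.obj g.left) ⋙ F).map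
      (CostructuredArrow.homMk (𝟙 g.left) (by simp) :
        CostructuredArrow.mk (g.hom ≫ Groupoid.inv g.hom) ⟶
          CostructuredArrow.mk (𝟙 (f.obj g.left))) = 𝟙 (F.obj g.left) := by
    simp
    exact F.map_id _
  rw [hv] at t2
  rw [t1, ← t2]
  exact Category.comp_id _

lemma U1 {x₁ x₂ : X} (v : x₁ ⟶ x₂) (g : CostructuredArrow f (f.obj x₁)) :
    (f.lanUnit.app F).app g.left ≫ (f.lan.obj F).map g.hom ≫
      (f.lan.obj F).map (f.map v) ≫ epsApp f F x₂ =
    nm (CostructuredArrow.proj f (f.obj x₁) ⋙ F) g (CostructuredArrow.mk (𝟙 (f.obj x₁)))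
      ≫ F.map v := by
  have h1 := ι_epsApp f F x₂ (CostructuredArrow.mk (g.hom ≫ f.map v))
  simp only [CostructuredArrow.mk_left, CostructuredArrow.mk_hom_eq_self] at h1
  simp only [← Functor.map_comp_assoc]
  rw [h1]
  have t1 : nm (CostructuredArrow.proj f (f.obj x₁) ⋙ F) g
        (CostructuredArrow.mk (𝟙 (f.obj x₁))) =
      nm (CostructuredArrow.proj f (f.obj x₂) ⋙ F)
        (CostructuredArrow.mk (g.hom ≫ f.map v))
        (CostructuredArrow.mk (𝟙 (f.obj x₁) ≫ f.map v)) :=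
    nm_transport f (f.map v) F g (CostructuredArrow.mk (𝟙 (f.obj x₁)))
  have t2 := nm_comp_map (CostructuredArrow.proj f (f.obj x₂) ⋙ F)
    (j := CostructuredArrow.mk (g.hom ≫ f.map v))
    (CostructuredArrow.homMk v (by simp) :
      CostructuredArrow.mk (𝟙 (f.obj x₁) ≫ f.map v) ⟶
        CostructuredArrow.mk (𝟙 (f.obj x₂)))
  have hv : (CostructuredArrow.proj f (f.obj x₂) ⋙ F).map
      (CostructuredArrow.homMk v (by simp) :
        CostructuredArrow.mk (𝟙 (f.obj x₁) ≫ f.map v) ⟶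
          CostructuredArrow.mk (𝟙 (f.obj x₂))) = F.map v := by
    simp
    rfl
  rw [hv] at t2
  rw [t1]
  exact t2.symm

/-- the counit as a natural transformation -/
noncomputable def epsNT : f ⋙ f.lan.obj F ⟶ F where
  app x := epsApp f F x
  naturality x₁ x₂ v := (hE f F (f.obj x₁)).hom_ext (fun g => by
    have hU1 := U1 f F v g
    have hι := ι_epsApp f F x₁ g
    simp only [LeftExtension.coconeAt_ι_app, StructuredArrow.mk_hom_eq_self,
      StructuredArrow.mk_right, Functor.comp_map, Category.assoc]
    dsimp only [Functor.LeftExtension.mk] at *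
    simp only [StructuredArrow.mk_hom_eq_self, StructuredArrow.mk_right]
    exact (Category.assoc _ _ _).trans (hU1.trans ((congrArg (· ≫ F.map v) hι.symm).trans
      ((congrArg (· ≫ F.map v) (Category.assoc _ _ _).symm).trans (Category.assoc _ _ _)))))

/-- comparison functor between the two comma categories -/
@[simps] def toStr (y : Y) : CostructuredArrow f y ⥤ StructuredArrow y f where
  obj a := StructuredArrow.mk (Y := a.left) (Groupoid.inv a.hom)
  map {a b} u := StructuredArrow.homMk u.left (by
    have hw := CostructuredArrow.w u
    simp only [StructuredArrow.mk_hom_eq_self]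
    rw [← hw]
    simp [Groupoid.inv_eq_inv])
  map_id a := by apply StructuredArrow.hom_ext; simp
  map_comp u v := by apply StructuredArrow.hom_ext; simp

@[simps] def fromStr (y : Y) : StructuredArrow y f ⥤ CostructuredArrow f y where
  obj h := CostructuredArrow.mk (Groupoid.inv h.hom)
  map {a b} u := CostructuredArrow.homMk u.right (by
    have hw := StructuredArrow.w u
    simp only [CostructuredArrow.mk_hom_eq_self]
    rw [← hw]
    simp [Groupoid.inv_eq_inv])
  map_id a := by apply CostructuredArrow.hom_ext; simp
  map_comp u v := by apply CostructuredArrow.hom_ext; simp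

noncomputable def strEquiv (y : Y) : CostructuredArrow f y ≌ StructuredArrow y f :=
  CategoryTheory.Equivalence.mk (toStr f y) (fromStr f y)
    (NatIso.ofComponents
      (fun a => CostructuredArrow.isoMk (Iso.refl _) (by simp [Groupoid.inv_eq_inv, fromStr, toStr]))
      (fun u => by apply CostructuredArrow.hom_ext; simp [fromStr, toStr]))
    (NatIso.ofComponents
      (fun h => StructuredArrow.isoMk (Iso.refl _) (by simp [Groupoid.inv_eq_inv, fromStr, toStr]))
      (fun u => by apply StructuredArrow.hom_ext; simp [fromStr, toStr]))

/-- the right extension given by the left Kan extension with our counit is pointwise -/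
noncomputable def epsPointwise (y : Y) :
    (RightExtension.mk (f.lan.obj F) (epsNT f F)).IsPointwiseRightKanExtensionAt y := by
  refine IsLimit.ofWhiskerEquivalence (strEquiv f y) ?_
  refine IsLimit.ofIsoLimit
    (coneOfCoconeIsLimit
      ((LeftExtension.mk (f.lan.obj F) (f.lanUnit.app F)).coconeAt y) (hE f F y)) ?_
  refine Cones.ext (Iso.refl _) (fun g => ?_)
  refine (hE f F y).hom_ext (fun g₀ => ?_)
  refine (ι_comp_coneOfCocone _ (hE f F y) g₀ g).trans ?_
  have h2 := U2 f F y g₀ g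
  have hst : (strEquiv f y).functor = toStr f y := rfl
  simp only [Functor.id_obj, Iso.refl_hom, Category.id_comp, Cone.whisker_π, whiskerLeft_app,
    hst, RightExtension.coneAt, LeftExtension.coconeAt_ι_app, Functor.LeftExtension.mk,
    Functor.RightExtension.mk, StructuredArrow.mk_hom_eq_self, StructuredArrow.mk_right,
    CostructuredArrow.mk_hom_eq_self, CostructuredArrow.mk_left, toStr_obj, Category.assoc]
  rw [epsNT]
  simp only [StructuredArrow.mk_hom_eq_self, StructuredArrow.mk_right,
    CostructuredArrow.mk_left, CostructuredArrow.mk_hom_eq_self]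
  exact h2.symm.trans ((Category.assoc _ _ _).symm.trans
    (congrArg (((f.lanUnit.app F).app g₀.left ≫ (f.lan.obj F).map g₀.hom) ≫ ·) (Category.id_comp _).symm))

variable (C) in
/-- the counit, natural in `F` -/
noncomputable def Eps : f.lan ⋙ (whiskeringLeft X Y C).obj f ⟶ 𝟭 (X ⥤ C) where
  app F := epsNT f F
  naturality {F F'} φ := by
    ext x
    refine (hE f F (f.obj x)).hom_ext (fun g => ?_)
    have hnat := congr_app (f.lanUnit.naturality φ) g.left
    have h4 : (f.lan.obj F).map g.hom ≫ (f.lan.map φ).app (f.obj x) =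
        (f.lan.map φ).app (f.obj g.left) ≫ (f.lan.obj F').map g.hom :=
      (f.lan.map φ).naturality g.hom
    have hι' := ι_epsApp f F' x g
    have hι := ι_epsApp f F x g
    have hnm := nm_natural (whiskerLeft (CostructuredArrow.proj f (f.obj x)) φ) g
      (CostructuredArrow.mk (𝟙 (f.obj x)))
    dsimp only [Functor.LeftExtension.mk] at *
    simp only [LeftExtension.coconeAt_ι_app, StructuredArrow.mk_hom_eq_self,
      StructuredArrow.mk_right, Functor.id_obj, Functor.comp_obj,
      whiskeringLeft_obj_obj, NatTrans.comp_app, whiskerLeft_app, Functor.id_map,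
      Functor.comp_map, whiskeringLeft_obj_map, CostructuredArrow.proj_obj,
      CostructuredArrow.mk_left, Category.assoc] at *
    rw [epsNT, epsNT]
    dsimp only
    exact (Category.assoc _ _ _).trans <| (congrArg (_ ≫ ·) ((reassoc_of% h4) (epsApp f F' x))).trans <|
      (Category.assoc _ _ _).symm.trans <| (congrArg (· ≫ _) hnat.symm).trans <|
      (Category.assoc _ _ _).trans <| (congrArg (_ ≫ ·) hι').trans <| hnm.symm.trans <|
      (congrArg (· ≫ _) hι.symm).trans <| (congrArg (· ≫ _) (Category.assoc _ _ _).symm).trans <|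
      Category.assoc _ _ _

noncomputable def epsPointwiseExt :
    (RightExtension.mk (f.lan.obj F) (epsNT f F)).IsPointwiseRightKanExtension :=
  fun y => epsPointwise f F y

instance epsIsRKE : (f.lan.obj F).IsRightKanExtension (epsNT f F) :=
  (epsPointwiseExt f F).isRightKanExtension

variable (C) in
/-- the pullback functor is left adjoint to the left Kan extension functor -/
noncomputable def lanRightAdjunction : (whiskeringLeft X Y C).obj f ⊣ f.lan :=
  Adjunction.mkOfHomEquiv
    { homEquiv := fun G F =>
        (homEquivOfIsRightKanExtension (α := epsNT f F) _ G).symm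
      homEquiv_naturality_right := fun {G F₁ F₂} β φ ↦
        hom_ext_of_isRightKanExtension _ (epsNT f F₂) _ _ (by
          ext x
          dsimp [homEquivOfIsRightKanExtension]
          rw [liftOfIsRightKanExtension_fac_app, NatTrans.comp_app, Category.assoc]
          have h : (f.lan.map φ).app (f.obj x) ≫ (epsNT f F₂).app x =
              (epsNT f F₁).app x ≫ φ.app x := congr_app ((Eps f C).naturality φ) x
          rw [h, liftOfIsRightKanExtension_fac_app_assoc])
      homEquiv_naturality_left_symm := fun {F₁ F₂ G} β φ ↦ by
        dsimp [homEquivOfIsRightKanExtension]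
        rw [Category.assoc] }

end Ambi7


/-- For a functor `f : X → Y` between essentially finite groupoids, the pullback
functor `f* : [Y, Vect_ℂ] → [X, Vect_ℂ]` (precomposition with `f`) admits a functor
`f_* : [X, Vect_ℂ] → [Y, Vect_ℂ]` which is simultaneously left adjoint and right
adjoint to `f*` (an ambidextrous adjunction). -/
theorem pullback_has_ambidextrous_adjoint
    (X Y : Type) [Groupoid.{0} X] [Groupoid.{0} Y]
    (hX : Finite (Skeleton X)) (hY : Finite (Skeleton Y))
    (hXhom : ∀ a b : X, Finite (a ⟶ b)) (hYhom : ∀ a b : Y, Finite (a ⟶ b))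
    (f : X ⥤ Y) :
    ∃ fLower : (X ⥤ FGModuleCat ℂ) ⥤ (Y ⥤ FGModuleCat ℂ),
      Nonempty (fLower ⊣ (Functor.whiskeringLeft X Y (FGModuleCat ℂ)).obj f) ∧
      Nonempty ((Functor.whiskeringLeft X Y (FGModuleCat ℂ)).obj f ⊣ fLower) := by
  haveI := hX
  haveI := hXhom
  haveI := hYhom
  exact ⟨f.lan, ⟨f.lanAdjunction (FGModuleCat ℂ)⟩,
    ⟨Ambi7.lanRightAdjunction f (FGModuleCat ℂ)⟩⟩
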